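/- arXiv:0711.0072 — 3 statements merged into one kernel-verified Lean document; each statement's English description precedes it below -/
import Mathlib

section
/- For any group G, the set LO(G) of positive cones of left orders on G, viewed as a subset of the product space {0,1}^G (identifying a subset with its indicator function, with the product topology), is closed, hence compact. -/
/-- `P : G → Bool` (an indicator function of a subset of `G`) is the positive cone of a
left order: closed under multiplication, and `G \ {1}` is the disjoint union of `P` and
`P⁻¹`. -/
def IsLeftOrderCone {G : Type*} [Group G] (P : G → Bool) : Prop :=
  (∀ a b : G, P a = true → P b = true → P (a * b) = true) ∧
  (∀ g : G, g ≠ 1 ↔ Xor' (P g = true) (P g⁻¹ = true))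

/-- The space of positive cones of left orders on `G`, as a subset of `{0,1}^G`
(with the product topology). -/
def LOset (G : Type*) [Group G] : Set (G → Bool) := {P | IsLeftOrderCone P}

theorem stmt_3 (G : Type*) [Group G] : IsClosed (LOset G) ∧ IsCompact (LOset G) := by
  have hclosed : IsClosed (LOset G) := by
    have heq : LOset G =
        (⋂ a : G, ⋂ b : G,
          {P : G → Bool | P a = true → P b = true → P (a * b) = true}) ∩
        (⋂ g : G, {P : G → Bool | g ≠ 1 ↔ Xor' (P g = true) (P g⁻¹ = true)}) := by
      ext P
      simp only [LOset, IsLeftOrderCone, Set.mem_setOf_eq, Set.mem_inter_iff,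
        Set.mem_iInter]

    rw [heq]
    refine IsClosed.inter (isClosed_iInter fun a => isClosed_iInter fun b => ?_)
      (isClosed_iInter fun g => ?_)
    · have hc : Continuous fun P : G → Bool => (P a, P b, P (a * b)) := by
        exact ((continuous_apply a).prodMk
          ((continuous_apply b).prodMk (continuous_apply (a * b))))
      exact (isClosed_discrete
        {t : Bool × Bool × Bool | t.1 = true → t.2.1 = true → t.2.2 = true}).preimage hc
    · have hc : Continuous fun P : G → Bool => (P g, P g⁻¹) :=
        (continuous_apply g).prodMk (continuous_apply g⁻¹)
      exact (isClosed_discrete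
        {t : Bool × Bool | g ≠ 1 ↔ Xor' (t.1 = true) (t.2 = true)}).preimage hc
  exact ⟨hclosed, hclosed.isCompact⟩
end

section
/- For n ≥ 2, the space LO(ℤⁿ) of positive cones of left orders on the free abelian group ℤⁿ has no isolated points. -/
/-- `P : M → Bool` is the positive cone of a left order on the additive group `M`:
closed under addition, and `M \ {0}` is the disjoint union of `P` and `-P`. -/
def IsAddLeftOrderCone {M : Type*} [AddGroup M] (P : M → Bool) : Prop :=
  (∀ a b : M, P a = true → P b = true → P (a + b) = true) ∧
  (∀ g : M, g ≠ 0 ↔ Xor' (P g = true) (P (-g) = true))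

/-- The space of positive cones of left orders, as a subset of `{0,1}^M`. -/
def AddLOset (M : Type*) [AddGroup M] : Set (M → Bool) := {P | IsAddLeftOrderCone P}

namespace Stmt9Aux

open Finset Matrix

variable {n : ℕ}

/-- Cast an integer vector to a real vector. -/
def iota (x : Fin n → ℤ) : Fin n → ℝ := fun i => (x i : ℝ)

/-- Dot product on `Fin n → ℝ`. -/
def dot (v w : Fin n → ℝ) : ℝ := ∑ i, v i * w i

lemma iota_zero : iota (0 : Fin n → ℤ) = 0 := by
  funext i; simp [iota]

lemma iota_add (x y : Fin n → ℤ) : iota (x + y) = iota x + iota y := by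
  funext i; simp [iota]

lemma iota_neg (x : Fin n → ℤ) : iota (-x) = -iota x := by
  funext i; simp [iota]

lemma iota_eq_zero {x : Fin n → ℤ} : iota x = 0 ↔ x = 0 := by
  constructor
  · intro h
    funext i
    have h2 : (x i : ℝ) = 0 := congrFun h i
    exact_mod_cast h2
  · rintro rfl; exact iota_zero

lemma iota_injective : Function.Injective (iota (n := n)) := by
  intro a b hab
  funext i
  have h : (a i : ℝ) = (b i : ℝ) := congrFun hab i
  exact_mod_cast h

lemma dot_add_left (u v w : Fin n → ℝ) : dot (u + v) w = dot u w + dot v w := by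
  simp [dot, add_mul, Finset.sum_add_distrib]

lemma dot_neg_left (v w : Fin n → ℝ) : dot (-v) w = -dot v w := by
  simp [dot]

lemma dot_zero_left (w : Fin n → ℝ) : dot 0 w = 0 := by simp [dot]

lemma dot_add_right (v w u : Fin n → ℝ) : dot v (w + u) = dot v w + dot v u := by
  simp [dot, mul_add, Finset.sum_add_distrib]

lemma dot_sub_right (v w u : Fin n → ℝ) : dot v (w - u) = dot v w - dot v u := by
  simp [dot, mul_sub, Finset.sum_sub_distrib]

lemma dot_smul_right (c : ℝ) (v w : Fin n → ℝ) : dot v (c • w) = c * dot v w := by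
  simp only [dot, Pi.smul_apply, smul_eq_mul, Finset.mul_sum]
  apply Finset.sum_congr rfl
  intro i _
  ring

lemma continuous_dot_left (v : Fin n → ℝ) : Continuous (fun w => dot v w) := by
  apply continuous_finset_sum
  intro i _
  exact continuous_const.mul (continuous_apply i)

lemma dot_self_pos {a : Fin n → ℝ} (ha : a ≠ 0) : 0 < dot a a := by
  obtain ⟨i, hi⟩ := Function.ne_iff.mp ha
  apply Finset.sum_pos' (fun j _ => mul_self_nonneg (a j))
  exact ⟨i, Finset.mem_univ i, mul_self_pos.mpr (by simpa using hi)⟩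

lemma norm_le_dot_self (z : Fin n → ℤ) : ‖iota z‖ ≤ dot (iota z) (iota z) := by
  have haa : (0:ℝ) ≤ dot (iota z) (iota z) :=
    Finset.sum_nonneg fun j _ => mul_self_nonneg _
  rw [pi_norm_le_iff_of_nonneg haa]
  intro i
  have h1 : ‖iota z i‖ = ((|z i| : ℤ) : ℝ) := by
    simp [iota, Real.norm_eq_abs]
  have h2 : (|z i| : ℤ) ≤ z i * z i := by
    rcases eq_or_ne (z i) 0 with h | h
    · simp [h]
    · have h1le : 1 ≤ |z i| := Int.one_le_abs (by exact_mod_cast h)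
      calc |z i| = 1 * |z i| := (one_mul _).symm
        _ ≤ |z i| * |z i| := mul_le_mul_of_nonneg_right h1le (abs_nonneg _)
        _ = z i * z i := abs_mul_abs_self _
  have h3 : ((z i * z i : ℤ) : ℝ) ≤ dot (iota z) (iota z) := by
    have he : ((z i * z i : ℤ) : ℝ) = iota z i * iota z i := by simp [iota]
    rw [he]
    exact Finset.single_le_sum (fun j _ => mul_self_nonneg (iota z j)) (Finset.mem_univ i)
  calc ‖iota z i‖ = ((|z i| : ℤ) : ℝ) := h1
    _ ≤ ((z i * z i : ℤ) : ℝ) := by exact_mod_cast h2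
    _ ≤ _ := h3

section Cone

variable (P : (Fin n → ℤ) → Bool)

lemma cone_nsmul (hP : IsAddLeftOrderCone P) {t : Fin n → ℤ} (ht : P t = true) :
    ∀ m : ℕ, 1 ≤ m → P (m • t) = true := by
  intro m hm
  induction m with
  | zero => omega
  | succ k ih =>
    rcases Nat.eq_zero_or_pos k with hk | hk
    · subst hk; simpa using ht
    · rw [succ_nsmul]
      exact hP.1 _ _ (ih hk) ht

lemma cone_zsmul (hP : IsAddLeftOrderCone P) {t : Fin n → ℤ} (ht : P t = true)
    {m : ℤ} (hm : 1 ≤ m) : P (m • t) = true := by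
  lift m to ℕ using (by omega)
  rw [natCast_zsmul]
  exact cone_nsmul P hP ht m (by exact_mod_cast hm)

lemma posComb (hP : IsAddLeftOrderCone P) (S : Finset (Fin n → ℤ)) (m : (Fin n → ℤ) → ℤ)
    (h0 : ∀ t ∈ S, 0 ≤ m t) (hPt : ∀ t ∈ S, P t = true) :
    (∑ t ∈ S, m t • t) = 0 ∨ P (∑ t ∈ S, m t • t) = true := by
  classical
  induction S using Finset.induction_on with
  | empty => left; simp
  | @insert a S' ha ih =>
    rw [Finset.sum_insert ha]
    have ih' := ih (fun t ht => h0 t (Finset.mem_insert_of_mem ht))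
      (fun t ht => hPt t (Finset.mem_insert_of_mem ht))
    rcases (h0 a (Finset.mem_insert_self a S')).eq_or_lt with hma | hma
    · rw [← hma, zero_smul, zero_add]
      exact ih'
    · have hPa : P (m a • a) = true :=
        cone_zsmul P hP (hPt a (Finset.mem_insert_self a S')) hma
      rcases ih' with h | h
      · rw [h, add_zero]; right; exact hPa
      · right; exact hP.1 _ _ hPa h

end Cone

/-- Transfer of a nontrivial real kernel vector to a nontrivial rational kernel vector. -/
lemma ratKernel {m k : ℕ} (A : Matrix (Fin m) (Fin k) ℚ) (x : Fin k → ℝ) (hx : x ≠ 0)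
    (hAx : (A.map ((↑) : ℚ → ℝ)).mulVec x = 0) :
    ∃ y : Fin k → ℚ, y ≠ 0 ∧ A.mulVec y = 0 := by
  classical
  set B : Matrix (Fin k) (Fin k) ℚ := Aᵀ * A with hB
  have hmap : B.map ((↑) : ℚ → ℝ) = (A.map ((↑) : ℚ → ℝ))ᵀ * A.map ((↑) : ℚ → ℝ) := by
    ext i j
    simp only [hB, Matrix.map_apply, Matrix.mul_apply, Matrix.transpose_apply]
    push_cast
    rfl
  have hBx : (B.map ((↑) : ℚ → ℝ)).mulVec x = 0 := by
    rw [hmap, ← Matrix.mulVec_mulVec, hAx, Matrix.mulVec_zero]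
  have hdetR : (B.map ((↑) : ℚ → ℝ)).det = 0 :=
    Matrix.exists_mulVec_eq_zero_iff.mp ⟨x, hx, hBx⟩
  have hdet : B.det = 0 := by
    have hmd := (Rat.castHom ℝ).map_det B
    rw [show (Rat.castHom ℝ).mapMatrix B = B.map ((↑) : ℚ → ℝ) from rfl] at hmd
    have h0 : ((B.det : ℚ) : ℝ) = 0 := by rw [show ((B.det : ℚ) : ℝ) = (Rat.castHom ℝ) B.det from rfl, hmd, hdetR]
    exact_mod_cast h0
  obtain ⟨y, hy, hBy⟩ := Matrix.exists_mulVec_eq_zero_iff.mpr hdet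
  refine ⟨y, hy, ?_⟩
  have hdp : (A.mulVec y) ⬝ᵥ (A.mulVec y) = 0 := by
    rw [Matrix.dotProduct_mulVec, ← Matrix.mulVec_transpose, Matrix.mulVec_mulVec, ← hB, hBy,
      zero_dotProduct]
  funext i
  have hterms : ∀ j ∈ Finset.univ, (0:ℚ) ≤ A.mulVec y j * A.mulVec y j :=
    fun j _ => mul_self_nonneg _
  have hz := (Finset.sum_eq_zero_iff_of_nonneg hterms).mp hdp i (Finset.mem_univ i)
  exact mul_self_eq_zero.mp hz

/-- There is no vanishing convex combination of nonzero positive elements of a cone. -/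
lemma noRelation (P : (Fin n → ℤ) → Bool) (hP : IsAddLeftOrderCone P)
    (T : Finset (Fin n → ℤ)) (hT : ∀ t ∈ T, t ≠ 0 ∧ P t = true) :
    (0 : Fin n → ℝ) ∉ convexHull ℝ (iota '' (T : Set (Fin n → ℤ))) := by
  classical
  intro h0
  rw [show iota '' (T : Set (Fin n → ℤ)) = ((T.image iota : Finset (Fin n → ℝ)) : Set (Fin n → ℝ))
    by rw [Finset.coe_image], Finset.mem_convexHull'] at h0
  obtain ⟨wt, hw0, hw1, hw2⟩ := h0
  set c : (Fin n → ℤ) → ℝ := fun t => wt (iota t) with hc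
  have hsum1 : ∑ t ∈ T, c t = 1 := by
    rw [← hw1, Finset.sum_image (fun a _ b _ h => iota_injective h)]
  have hsum2 : ∑ t ∈ T, c t • iota t = 0 := by
    rw [← hw2, Finset.sum_image (fun a _ b _ h => iota_injective h)]
  have hcnn : ∀ t ∈ T, 0 ≤ c t := fun t ht =>
    hw0 (iota t) (Finset.mem_image_of_mem iota ht)
  -- the collection of "good" subsets supporting a strictly positive vanishing combination
  set good : Finset (Fin n → ℤ) → Prop := fun S =>
    S.Nonempty ∧ ∃ cc : (Fin n → ℤ) → ℝ, (∀ t ∈ S, 0 < cc t) ∧ ∑ t ∈ S, cc t • iota t = 0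
    with hgood
  have hS0 : good (T.filter (fun t => 0 < c t)) := by
    constructor
    · by_contra hne
      rw [Finset.not_nonempty_iff_eq_empty, Finset.filter_eq_empty_iff] at hne
      have hz : ∑ t ∈ T, c t = 0 := Finset.sum_eq_zero fun t ht =>
        le_antisymm (not_lt.mp (hne ht)) (hcnn t ht)
      rw [hsum1] at hz; norm_num at hz
    · refine ⟨c, fun t ht => (Finset.mem_filter.mp ht).2, ?_⟩
      rw [← hsum2]
      apply Finset.sum_subset (Finset.filter_subset _ _)
      intro t ht htn
      have hz : c t = 0 := le_antisymm
        (not_lt.mp (fun h => htn (Finset.mem_filter.mpr ⟨ht, h⟩))) (hcnn t ht)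
      simp [hz]
  obtain ⟨S, hSmem, hSmin⟩ := Finset.exists_min_image
    (T.powerset.filter good) Finset.card
    ⟨T.filter (fun t => 0 < c t), Finset.mem_filter.mpr
      ⟨Finset.mem_powerset.mpr (Finset.filter_subset _ _), hS0⟩⟩
  have hSpow : S ⊆ T := Finset.mem_powerset.mp (Finset.mem_filter.mp hSmem).1
  obtain ⟨hSne, cS, hcpos, hcrel⟩ := (Finset.mem_filter.mp hSmem).2
  -- set up the matrix
  set k := S.card with hk
  set e : {x // x ∈ S} ≃ Fin k := S.equivFin with he
  set A : Matrix (Fin n) (Fin k) ℚ := fun i j => (((e.symm j : {x // x ∈ S}) : Fin n → ℤ) i : ℚ)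
    with hA
  set xv : Fin k → ℝ := fun j => cS ((e.symm j : {x // x ∈ S}) : Fin n → ℤ) with hxv
  have hxne : xv ≠ 0 := by
    obtain ⟨t0, ht0⟩ := hSne
    intro hzero
    have hzz := congrFun hzero (e ⟨t0, ht0⟩)
    rw [hxv] at hzz
    simp only [Equiv.symm_apply_apply, Pi.zero_apply] at hzz
    exact absurd hzz (ne_of_gt (hcpos t0 ht0))
  have hAx : (A.map ((↑) : ℚ → ℝ)).mulVec xv = 0 := by
    funext i
    have hi := congrFun hcrel i
    simp only [Finset.sum_apply, Pi.smul_apply, smul_eq_mul, Pi.zero_apply] at hi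
    have key : ∑ j : Fin k, (((e.symm j : {x // x ∈ S}) : Fin n → ℤ) i : ℝ) *
        cS ((e.symm j : {x // x ∈ S}) : Fin n → ℤ) = 0 := by
      rw [Equiv.sum_comp e.symm
        (fun a : {x // x ∈ S} => ((a : Fin n → ℤ) i : ℝ) * cS (a : Fin n → ℤ))]
      rw [Finset.sum_coe_sort S (fun t => ((t i : ℝ)) * cS t)]
      rw [← hi]
      apply Finset.sum_congr rfl
      intro t _
      simp [iota, mul_comm]
    simp only [Matrix.mulVec, dotProduct, Matrix.map_apply, hA, hxv, Pi.zero_apply]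
    push_cast
    exact key
  obtain ⟨y, hyne, hAy⟩ := ratKernel A xv hxne hAx
  -- build the rational coefficients
  set μ : (Fin n → ℤ) → ℚ := fun t => if h : t ∈ S then y (e ⟨t, h⟩) else 0 with hμ
  have hμrel : ∀ i, ∑ t ∈ S, μ t * (t i : ℚ) = 0 := by
    intro i
    have hi := congrFun hAy i
    simp only [Matrix.mulVec, dotProduct, hA, Pi.zero_apply] at hi
    rw [← Finset.sum_coe_sort S (fun t => μ t * (t i : ℚ)),
      ← Equiv.sum_comp e.symm
        (fun a : {x // x ∈ S} => μ (a : Fin n → ℤ) * ((a : Fin n → ℤ) i : ℚ))]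
    rw [← hi]
    apply Finset.sum_congr rfl
    intro j _
    have hmem := (e.symm j).2
    rw [hμ]
    simp only [hmem, dif_pos]
    rw [show (⟨((e.symm j : {x // x ∈ S}) : Fin n → ℤ), hmem⟩ : {x // x ∈ S}) = e.symm j from
      Subtype.eta _ _, Equiv.apply_symm_apply, mul_comm]
  have hμex : ∃ t ∈ S, μ t ≠ 0 := by
    obtain ⟨j, hj⟩ := Function.ne_iff.mp hyne
    refine ⟨((e.symm j : {x // x ∈ S}) : Fin n → ℤ), (e.symm j).2, ?_⟩
    rw [hμ]
    simp only [(e.symm j).2, dif_pos]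
    rw [show (⟨((e.symm j : {x // x ∈ S}) : Fin n → ℤ), (e.symm j).2⟩ : {x // x ∈ S}) = e.symm j
      from Subtype.eta _ _, Equiv.apply_symm_apply]
    simpa using hj
  obtain ⟨t1, ht1S, ht1⟩ := hμex
  -- normalize the sign
  set ε : ℚ := if 0 < μ t1 then 1 else -1 with hε
  set μ' : (Fin n → ℤ) → ℚ := fun t => ε * μ t with hμ'
  have hμ'rel : ∀ i, ∑ t ∈ S, μ' t * (t i : ℚ) = 0 := by
    intro i
    rw [hμ']
    simp only [mul_assoc]
    rw [← Finset.mul_sum, hμrel i, mul_zero]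
  have hμ't1 : 0 < μ' t1 := by
    rw [hμ', hε]
    rcases lt_trichotomy (μ t1) 0 with h | h | h
    · rw [if_neg (by linarith)]; simp only; linarith
    · exact absurd h ht1
    · rw [if_pos h]; simp only; linarith
  -- real version of the relation
  have hvec : ∑ t ∈ S, ((μ' t : ℝ)) • iota t = 0 := by
    funext i
    simp only [Finset.sum_apply, Pi.smul_apply, smul_eq_mul, Pi.zero_apply]
    have hq := hμ'rel i
    have hcast : ((∑ t ∈ S, μ' t * (t i : ℚ) : ℚ) : ℝ) = 0 := by rw [hq]; norm_num
    push_cast at hcast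
    rw [← hcast]
    apply Finset.sum_congr rfl
    intro t _
    simp [iota]
  -- the exchange argument
  set S' := S.filter (fun t => 0 < μ' t) with hS'
  have hS'ne : S'.Nonempty := ⟨t1, Finset.mem_filter.mpr ⟨ht1S, hμ't1⟩⟩
  obtain ⟨t0, ht0S', hmin0⟩ := Finset.exists_min_image S' (fun t => cS t / ((μ' t : ℝ))) hS'ne
  have ht0S : t0 ∈ S := (Finset.mem_filter.mp ht0S').1
  have hμ't0 : (0:ℝ) < (μ' t0 : ℝ) := by exact_mod_cast (Finset.mem_filter.mp ht0S').2
  set cstar : ℝ := cS t0 / (μ' t0 : ℝ) with hcstar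
  have hcstarpos : 0 < cstar := div_pos (hcpos t0 ht0S) hμ't0
  set d : (Fin n → ℤ) → ℝ := fun t => cS t - cstar * (μ' t : ℝ) with hd
  have hd0 : ∀ t ∈ S, 0 ≤ d t := by
    intro t ht
    rw [hd]
    by_cases hpos : 0 < μ' t
    · have htS' : t ∈ S' := Finset.mem_filter.mpr ⟨ht, hpos⟩
      have hrat := hmin0 t htS'
      have hμ'tr : (0:ℝ) < (μ' t : ℝ) := by exact_mod_cast hpos
      have hle : cstar * (μ' t : ℝ) ≤ cS t := by
        have := (div_le_div_iff₀ hμ't0 hμ'tr).mp hrat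
        rw [hcstar, div_mul_eq_mul_div, div_le_iff₀ hμ't0]
        linarith
      simp only
      linarith
    · have hμ'tr : (μ' t : ℝ) ≤ 0 := by
        push_neg at hpos
        exact_mod_cast hpos
      have := mul_nonpos_of_nonneg_of_nonpos (le_of_lt hcstarpos) hμ'tr
      have := hcpos t ht
      simp only
      linarith
  have hdt0 : d t0 = 0 := by
    rw [hd]
    simp only
    rw [hcstar, div_mul_cancel₀ _ (ne_of_gt hμ't0), sub_self]
  have hdrel : ∑ t ∈ S, d t • iota t = 0 := by
    rw [hd]
    simp only [sub_smul, mul_smul]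
    rw [Finset.sum_sub_distrib, hcrel, ← Finset.smul_sum, hvec, smul_zero, sub_zero]
  by_cases hcase : ∃ t2 ∈ S, 0 < d t2
  · -- a smaller good set exists : contradiction with minimality
    obtain ⟨t2, ht2S, ht2⟩ := hcase
    set S1 := S.filter (fun t => 0 < d t) with hS1
    have hS1good : good S1 := by
      refine ⟨⟨t2, Finset.mem_filter.mpr ⟨ht2S, ht2⟩⟩, d,
        fun t ht => (Finset.mem_filter.mp ht).2, ?_⟩
      rw [← hdrel]
      apply Finset.sum_subset (Finset.filter_subset _ _)
      intro t ht htn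
      have hz : d t = 0 := le_antisymm
        (not_lt.mp (fun h => htn (Finset.mem_filter.mpr ⟨ht, h⟩))) (hd0 t ht)
      simp [hz]
    have hS1T : S1 ⊆ T := (Finset.filter_subset _ _).trans hSpow
    have hS1mem : S1 ∈ T.powerset.filter good :=
      Finset.mem_filter.mpr ⟨Finset.mem_powerset.mpr hS1T, hS1good⟩
    have hge := hSmin S1 hS1mem
    have hlt : S1.card < S.card := by
      apply Finset.card_lt_card
      rw [Finset.ssubset_iff_of_subset (Finset.filter_subset _ _)]
      refine ⟨t0, ht0S, fun h => ?_⟩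
      have hcon := (Finset.mem_filter.mp h).2
      rw [hdt0] at hcon
      exact lt_irrefl 0 hcon
    omega
  · -- all coefficients proportional : rational positive relation
    push_neg at hcase
    have hdzero : ∀ t ∈ S, d t = 0 := fun t ht => le_antisymm (hcase t ht) (hd0 t ht)
    have hμ'pos : ∀ t ∈ S, 0 < μ' t := by
      intro t ht
      have hz := hdzero t ht
      rw [hd] at hz
      simp only at hz
      have hcc : cS t = cstar * (μ' t : ℝ) := by linarith
      have hgt : (0:ℝ) < (μ' t : ℝ) := by
        by_contra hle
        push_neg at hle
        nlinarith [hcpos t ht, mul_nonpos_of_nonneg_of_nonpos (le_of_lt hcstarpos) hle]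
      exact_mod_cast hgt
    -- clear denominators
    set D : ℤ := ∏ t ∈ S, ((μ' t).den : ℤ) with hD
    have hDpos : 0 < D := Finset.prod_pos fun t _ => by exact_mod_cast (μ' t).pos
    have hdvd : ∀ t ∈ S, ((μ' t).den : ℤ) ∣ D := fun t ht =>
      Finset.dvd_prod_of_mem (fun t => ((μ' t).den : ℤ)) ht
    set mcoef : (Fin n → ℤ) → ℤ := fun t => (μ' t).num * (D / ((μ' t).den : ℤ)) with hmcoef
    have hkey : ∀ t ∈ S, ((mcoef t : ℤ) : ℚ) = μ' t * (D : ℚ) := by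
      intro t ht
      obtain ⟨k', hk'⟩ := hdvd t ht
      have hden0 : ((μ' t).den : ℤ) ≠ 0 := by exact_mod_cast (μ' t).den_ne_zero
      have hdiv : D / ((μ' t).den : ℤ) = k' := by
        rw [hk', Int.mul_ediv_cancel_left _ hden0]
      rw [hmcoef]
      simp only [hdiv]
      have hnum : (μ' t) * ((μ' t).den : ℚ) = ((μ' t).num : ℚ) := Rat.mul_den_eq_num _
      have hDq : (D : ℚ) = ((μ' t).den : ℚ) * (k' : ℚ) := by exact_mod_cast hk'
      push_cast
      rw [hDq, ← mul_assoc, hnum]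
    have hm1 : ∀ t ∈ S, 1 ≤ mcoef t := by
      intro t ht
      have hpos : (0:ℚ) < μ' t * (D : ℚ) := by
        apply mul_pos (hμ'pos t ht)
        exact_mod_cast hDpos
      rw [← hkey t ht] at hpos
      have : (0:ℤ) < mcoef t := by exact_mod_cast hpos
      omega
    have hmrel : ∑ t ∈ S, mcoef t • t = (0 : Fin n → ℤ) := by
      funext i
      simp only [Finset.sum_apply, Pi.smul_apply, smul_eq_mul, Pi.zero_apply]
      have hq : ∑ t ∈ S, (mcoef t : ℚ) * (t i : ℚ) = 0 := by
        calc ∑ t ∈ S, (mcoef t : ℚ) * (t i : ℚ)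
            = ∑ t ∈ S, (D:ℚ) * (μ' t * (t i : ℚ)) := by
              apply Finset.sum_congr rfl
              intro t ht
              rw [hkey t ht]; ring
          _ = (D:ℚ) * ∑ t ∈ S, μ' t * (t i : ℚ) := (Finset.mul_sum _ _ _).symm
          _ = 0 := by rw [hμ'rel i, mul_zero]
      have : ((∑ t ∈ S, mcoef t * t i : ℤ) : ℚ) = 0 := by push_cast; exact hq
      exact_mod_cast this
    -- final contradiction with the cone axioms
    set m' : (Fin n → ℤ) → ℤ := fun t => if t = t0 then mcoef t - 1 else mcoef t with hm'
    have hm'0 : ∀ t ∈ S, 0 ≤ m' t := by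
      intro t ht
      have h1 := hm1 t ht
      simp only [hm']
      by_cases h : t = t0
      · rw [if_pos h]; omega
      · rw [if_neg h]; omega
    have hsplit : ∀ t ∈ S, m' t • t = mcoef t • t - (if t = t0 then t0 else 0) := by
      intro t ht
      simp only [hm']
      by_cases h : t = t0
      · subst h
        simp [sub_smul]
      · simp [h]
    have hsum' : ∑ t ∈ S, m' t • t = -t0 := by
      rw [Finset.sum_congr rfl hsplit, Finset.sum_sub_distrib, hmrel,
        Finset.sum_ite_eq' S t0 (fun _ => t0), if_pos ht0S, zero_sub]
    have ht0prop := hT t0 (hSpow ht0S)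
    rcases posComb P hP S m' hm'0 (fun t ht => (hT t (hSpow ht)).2) with h | h
    · rw [hsum'] at h
      exact ht0prop.1 (neg_eq_zero.mp h)
    · rw [hsum'] at h
      have hxor := (hP.2 t0).mp ht0prop.1
      rcases hxor with ⟨_, hnot⟩ | ⟨_, hnot⟩
      · exact hnot h
      · exact hnot ht0prop.2

/-- The modified positive cone determined by a totally irrational functional. -/
noncomputable def Qcone (P : (Fin n → ℤ) → Bool) (w : Fin n → ℝ) : (Fin n → ℤ) → Bool :=
  fun x => if x = 0 then P 0 else decide (0 < dot (iota x) w)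

lemma Qcone_isCone (P : (Fin n → ℤ) → Bool) (w : Fin n → ℝ)
    (hw : ∀ x : Fin n → ℤ, x ≠ 0 → dot (iota x) w ≠ 0) :
    IsAddLeftOrderCone (Qcone P w) := by
  constructor
  · intro a b ha hb
    by_cases ha0 : a = 0
    · subst ha0; rw [zero_add]; exact hb
    by_cases hb0 : b = 0
    · subst hb0; rw [add_zero]; exact ha
    rw [Qcone, if_neg ha0] at ha
    rw [Qcone, if_neg hb0] at hb
    have hda : 0 < dot (iota a) w := of_decide_eq_true ha
    have hdb : 0 < dot (iota b) w := of_decide_eq_true hb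
    have hdab : 0 < dot (iota (a + b)) w := by
      rw [iota_add, dot_add_left]
      linarith
    have hab0 : a + b ≠ 0 := by
      intro h
      rw [h, iota_zero, dot_zero_left] at hdab
      exact lt_irrefl 0 hdab
    rw [Qcone, if_neg hab0]
    exact decide_eq_true hdab
  · intro g
    by_cases hg : g = 0
    · subst hg
      simp [Qcone, Xor']
    · have hgd := hw g hg
      have hgneg : -g ≠ 0 := neg_ne_zero.mpr hg
      have hQg : (Qcone P w g = true) ↔ 0 < dot (iota g) w := by
        simp only [Qcone, if_neg hg, decide_eq_true_eq]
      have hQng : (Qcone P w (-g) = true) ↔ 0 < -dot (iota g) w := by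
        simp only [Qcone, if_neg hgneg, decide_eq_true_eq, iota_neg, dot_neg_left]
      constructor
      · intro _
        rcases hgd.lt_or_gt with h | h
        · exact Or.inr ⟨hQng.mpr (by linarith), fun hc => by
            have := hQg.mp hc; linarith⟩
        · exact Or.inl ⟨hQg.mpr h, fun hc => by
            have := hQng.mp hc; linarith⟩
      · intro _
        exact hg

/-- The auxiliary finite set of positive elements determined by `P` and `F`. -/
def Tset (P : (Fin n → ℤ) → Bool) (F : Finset (Fin n → ℤ)) : Finset (Fin n → ℤ) :=
  (F.filter (fun s => s ≠ 0)).image (fun s => if P s = true then s else -s)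

lemma Tset_spec (P : (Fin n → ℤ) → Bool) (hP : IsAddLeftOrderCone P)
    (F : Finset (Fin n → ℤ)) : ∀ t ∈ Tset P F, t ≠ 0 ∧ P t = true := by
  intro t ht
  rw [Tset, Finset.mem_image] at ht
  obtain ⟨s, hs, rfl⟩ := ht
  obtain ⟨-, hs0⟩ := Finset.mem_filter.mp hs
  by_cases hPs : P s = true
  · rw [if_pos hPs]
    exact ⟨hs0, hPs⟩
  · rw [if_neg hPs]
    refine ⟨neg_ne_zero.mpr hs0, ?_⟩
    rcases (hP.2 s).mp hs0 with ⟨h, -⟩ | ⟨h, -⟩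
    · exact absurd h hPs
    · exact h

lemma Qcone_agree (P : (Fin n → ℤ) → Bool) (F : Finset (Fin n → ℤ)) (w : Fin n → ℝ)
    (hw : ∀ t ∈ Tset P F, 0 < dot (iota t) w) :
    ∀ s ∈ F, Qcone P w s = P s := by
  intro s hs
  by_cases h0 : s = 0
  · subst h0
    rw [Qcone, if_pos rfl]
  · rw [Qcone, if_neg h0]
    by_cases hPs : P s = true
    · have hmem : s ∈ Tset P F := by
        rw [Tset, Finset.mem_image]
        exact ⟨s, Finset.mem_filter.mpr ⟨hs, h0⟩, if_pos hPs⟩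
      rw [hPs]
      exact decide_eq_true (hw s hmem)
    · have hmem : -s ∈ Tset P F := by
        rw [Tset, Finset.mem_image]
        exact ⟨s, Finset.mem_filter.mpr ⟨hs, h0⟩, if_neg hPs⟩
      have hneg := hw (-s) hmem
      rw [iota_neg, dot_neg_left] at hneg
      have hlt : ¬(0 < dot (iota s) w) := by intro h; linarith
      rw [Bool.not_eq_true] at hPs
      rw [hPs]
      exact decide_eq_false hlt
    
/-- The set of totally irrational functionals is dense. -/
lemma denseIrr : Dense {w : Fin n → ℝ | ∀ x : Fin n → ℤ, x ≠ 0 → dot (iota x) w ≠ 0} := by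
  have heq : {w : Fin n → ℝ | ∀ x : Fin n → ℤ, x ≠ 0 → dot (iota x) w ≠ 0} =
      ⋂ (x : {x : Fin n → ℤ // x ≠ 0}), {w | dot (iota x.1) w ≠ 0} := by
    ext w
    simp only [Set.mem_setOf_eq, Set.mem_iInter, Subtype.forall]
  rw [heq]
  apply dense_iInter_of_isOpen
  · intro x
    exact isOpen_ne_fun (continuous_dot_left (iota x.1)) continuous_const
  · intro x
    rw [Metric.dense_iff]
    intro w r hr
    set a := iota x.1 with hadef
    have ha : a ≠ 0 := fun h => x.2 (iota_eq_zero.mp h)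
    have hnorm : 0 < ‖a‖ := norm_pos_iff.mpr ha
    have haa : 0 < dot a a := dot_self_pos ha
    by_cases h : dot a w ≠ 0
    · exact ⟨w, Metric.mem_ball_self hr, h⟩
    · push_neg at h
      set δ : ℝ := r / (2 * ‖a‖) with hδ
      have hδpos : 0 < δ := by positivity
      refine ⟨w + δ • a, ?_, ?_⟩
      · rw [Metric.mem_ball, dist_eq_norm, add_sub_cancel_left, norm_smul,
          Real.norm_eq_abs, abs_of_pos hδpos, hδ]
        rw [div_mul_eq_mul_div, mul_comm (2 : ℝ) ‖a‖, ← div_div,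
          mul_div_assoc, div_self (ne_of_gt hnorm), mul_one]
        linarith
      · show dot a (w + δ • a) ≠ 0
        rw [dot_add_right, dot_smul_right, h, zero_add]
        positivity

/-- A totally irrational functional takes arbitrarily small positive values on `ℤⁿ`. -/
lemma smallValue (hn : 2 ≤ n) (w : Fin n → ℝ)
    (hw : ∀ x : Fin n → ℤ, x ≠ 0 → dot (iota x) w ≠ 0) {η : ℝ} (hη : 0 < η) :
    ∃ z : Fin n → ℤ, z ≠ 0 ∧ 0 < dot (iota z) w ∧ dot (iota z) w < η := by
  classical
  set i0 : Fin n := ⟨0, by omega⟩ with hi0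
  set i1 : Fin n := ⟨1, by omega⟩ with hi1
  have hne : i0 ≠ i1 := by
    intro h
    rw [hi0, hi1] at h
    exact absurd (congrArg Fin.val h) (by norm_num)
  have hsingle : ∀ (i : Fin n) (p : ℤ), dot (iota (Pi.single i p)) w = (p : ℝ) * w i := by
    intro i p
    rw [dot]
    have hterm : ∀ j ∈ Finset.univ, iota (Pi.single i p) j * w j =
        (if j = i then (p : ℝ) * w j else 0) := by
      intro j _
      by_cases h : j = i
      · subst h; simp [iota, Pi.single_apply]
      · simp [iota, Pi.single_apply, h]
    rw [Finset.sum_congr rfl hterm,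
      Finset.sum_ite_eq' Finset.univ i (fun j => (p:ℝ) * w j), if_pos (Finset.mem_univ i)]
  have hpair : ∀ (p q : ℤ), dot (iota (Pi.single i0 p + Pi.single i1 q)) w
      = (p:ℝ) * w i0 + (q:ℝ) * w i1 := by
    intro p q
    rw [iota_add, dot_add_left, hsingle, hsingle]
  set G : AddSubgroup ℝ := AddSubgroup.closure ({w i0, w i1} : Set ℝ) with hG
  rcases G.dense_or_cyclic with hdense | ⟨r, hr⟩
  · obtain ⟨g, hgI, hgG⟩ := hdense.inter_open_nonempty (Set.Ioo 0 η) isOpen_Ioo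
      ⟨η/2, by constructor <;> [linarith; linarith]⟩
    rw [hG] at hgG
    obtain ⟨p, q, hpq⟩ := AddSubgroup.mem_closure_pair.mp hgG
    refine ⟨Pi.single i0 p + Pi.single i1 q, ?_, ?_, ?_⟩
    · intro h
      have h2 := hpair p q
      rw [h, iota_zero, dot_zero_left] at h2
      simp only [zsmul_eq_mul] at hpq
      rw [hpq] at h2
      have := hgI.1
      rw [← h2] at this
      exact lt_irrefl 0 this
    · rw [hpair]
      have : (p:ℝ) * w i0 + (q:ℝ) * w i1 = g := by
        rw [← hpq]; simp [zsmul_eq_mul]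
      rw [this]
      exact hgI.1
    · rw [hpair]
      have : (p:ℝ) * w i0 + (q:ℝ) * w i1 = g := by
        rw [← hpq]; simp [zsmul_eq_mul]
      rw [this]
      exact hgI.2
  · exfalso
    have h0 : w i0 ∈ G := AddSubgroup.subset_closure (by simp)
    have h1 : w i1 ∈ G := AddSubgroup.subset_closure (by simp)
    rw [hr] at h0 h1
    obtain ⟨p, hp⟩ := AddSubgroup.mem_closure_singleton.mp h0
    obtain ⟨q, hq⟩ := AddSubgroup.mem_closure_singleton.mp h1
    set z : Fin n → ℤ := Pi.single i0 q + (-(Pi.single i1 p)) with hz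
    have hdz : dot (iota z) w = 0 := by
      rw [hz, iota_add, dot_add_left, iota_neg, dot_neg_left, hsingle, hsingle]
      rw [← hp, ← hq]
      simp only [zsmul_eq_mul]
      ring
    by_cases hz0 : z = 0
    · -- then q = 0 and w i0 = 0, contradicting irrationality at a single basis vector
      have hq0 : q = 0 := by
        have := congrFun hz0 i0
        rw [hz] at this
        simpa [Pi.single_apply, hne, Ne.symm hne] using this
      have hw1 : w i1 = 0 := by
        rw [← hq, hq0, zero_zsmul]
      have hsingle0 : (Pi.single i1 (1:ℤ) : Fin n → ℤ) ≠ 0 := by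
        intro h
        have := congrFun h i1
        simp [Pi.single_apply] at this
      apply hw (Pi.single i1 1) hsingle0
      rw [hsingle, hw1, mul_zero]
    · exact hw z hz0 hdz

end Stmt9Aux

open Stmt9Aux in
theorem stmt_9 (n : ℕ) (hn : 2 ≤ n) :
    ∀ x : AddLOset (Fin n → ℤ), ¬ IsOpen ({x} : Set (AddLOset (Fin n → ℤ))) := by
  classical
  intro x hopen
  set P : (Fin n → ℤ) → Bool := (x : (Fin n → ℤ) → Bool) with hPdef
  have hP : IsAddLeftOrderCone P := x.2
  -- extract a finite set of coordinates that determines `P`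
  have hx : ({x} : Set (AddLOset (Fin n → ℤ))) ∈ nhds x := hopen.mem_nhds rfl
  rw [nhds_subtype, Filter.mem_comap] at hx
  obtain ⟨t, ht, hsub⟩ := hx
  obtain ⟨U, hUt, hUopen, hPU⟩ := mem_nhds_iff.mp ht
  obtain ⟨F, u, hu, hpi⟩ := isOpen_pi_iff.mp hUopen P hPU
  have uniq : ∀ Q : (Fin n → ℤ) → Bool, IsAddLeftOrderCone Q →
      (∀ s ∈ F, Q s = P s) → Q = P := by
    intro Q hQ hQF
    have hQpi : Q ∈ (F : Set (Fin n → ℤ)).pi u := by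
      intro s hsF
      rw [hQF s hsF]
      exact (hu s hsF).2
    have hmem : (⟨Q, hQ⟩ : AddLOset (Fin n → ℤ)) ∈ ({x} : Set (AddLOset (Fin n → ℤ))) :=
      hsub (hUt (hpi hQpi))
    have := Set.mem_singleton_iff.mp hmem
    exact congrArg Subtype.val this
  -- the positive data and the separating functional
  set T := Tset P F with hT
  have hTspec : ∀ t' ∈ T, t' ≠ 0 ∧ P t' = true := Tset_spec P hP F
  have h0hull : (0 : Fin n → ℝ) ∉ convexHull ℝ (iota '' (T : Set (Fin n → ℤ))) :=
    noRelation P hP T hTspec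
  have hfin : (iota '' (T : Set (Fin n → ℤ))).Finite := T.finite_toSet.image iota
  have hclosed : IsClosed (convexHull ℝ (iota '' (T : Set (Fin n → ℤ)))) :=
    (hfin.isCompact_convexHull (𝕜 := ℝ)).isClosed
  have hconv : Convex ℝ (convexHull ℝ (iota '' (T : Set (Fin n → ℤ)))) :=
    convex_convexHull ℝ _
  obtain ⟨f, uu, hfu, hfT⟩ := geometric_hahn_banach_point_closed hconv hclosed h0hull
  have hu0 : 0 < uu := by
    have := hfu
    rwa [map_zero] at this
  set v : Fin n → ℝ := fun i => f (Pi.single i 1) with hv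
  have hfv : ∀ y : Fin n → ℝ, f y = dot y v := by
    intro y
    have hdecomp : y = ∑ i : Fin n, y i • (Pi.single i (1:ℝ) : Fin n → ℝ) := by
      funext j
      rw [Finset.sum_apply]
      have hterm : ∀ i ∈ Finset.univ, (y i • (Pi.single i (1:ℝ) : Fin n → ℝ)) j =
          if i = j then y j else 0 := by
        intro i _
        by_cases h : i = j
        · subst h; simp [Pi.single_apply]
        · simp [Pi.single_apply, h, Ne.symm h]
      rw [Finset.sum_congr rfl hterm,
        Finset.sum_ite_eq' Finset.univ j (fun _ => y j), if_pos (Finset.mem_univ j)]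
    conv_lhs => rw [hdecomp]
    rw [map_sum]
    simp only [map_smul, smul_eq_mul]
    rw [dot, hv]
  have hvT : ∀ t' ∈ T, 0 < dot (iota t') v := by
    intro t' ht'
    rw [← hfv]
    exact lt_trans hu0 (hfT _ (subset_convexHull ℝ _ (Set.mem_image_of_mem _ ht')))
  -- the open set of admissible functionals
  set O : Set (Fin n → ℝ) := {w | ∀ t' ∈ T, 0 < dot (iota t') w} with hO
  have hOeq : O = ⋂ t' ∈ T, {w | 0 < dot (iota t') w} := by
    ext w
    simp [hO, Set.mem_iInter]
  have hOopen : IsOpen O := by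
    rw [hOeq]
    apply isOpen_biInter_finset
    intro t' _
    exact isOpen_lt continuous_const (continuous_dot_left (iota t'))
  have hvO : v ∈ O := hvT
  -- pick a totally irrational functional near `v`
  set 𝒟 : Set (Fin n → ℝ) := {w | ∀ z : Fin n → ℤ, z ≠ 0 → dot (iota z) w ≠ 0} with h𝒟def
  have h𝒟 : Dense 𝒟 := denseIrr
  obtain ⟨w, hwO, hw𝒟⟩ := h𝒟.inter_open_nonempty O hOopen ⟨v, hvO⟩
  obtain ⟨ε, hε, hball⟩ := Metric.isOpen_iff.mp hOopen w hwO
  -- find a small positive value and flip it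
  obtain ⟨z, hz0, hzpos, hzlt⟩ := smallValue hn w hw𝒟 (η := ε/2) (by linarith)
  set a := iota z with ha
  have hane : a ≠ 0 := fun h => hz0 (iota_eq_zero.mp h)
  have haa : 0 < dot a a := dot_self_pos hane
  have hnorm_le : ‖a‖ ≤ dot a a := norm_le_dot_self z
  set cc : ℝ := 2 * dot a w / dot a a with hcc
  have hccpos : 0 < cc := by positivity
  set u₀ : Fin n → ℝ := w - cc • a with hu₀
  have hdau₀ : dot a u₀ < 0 := by
    rw [hu₀, dot_sub_right, dot_smul_right, hcc, div_mul_cancel₀ _ (ne_of_gt haa)]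
    linarith
  have hu₀ball : u₀ ∈ Metric.ball w ε := by
    rw [Metric.mem_ball, dist_eq_norm, hu₀, sub_sub_cancel_left, norm_neg, norm_smul,
      Real.norm_eq_abs, abs_of_pos hccpos, hcc]
    calc 2 * dot a w / dot a a * ‖a‖ ≤ 2 * dot a w / dot a a * dot a a := by
          apply mul_le_mul_of_nonneg_left hnorm_le (le_of_lt (by positivity))
      _ = 2 * dot a w := div_mul_cancel₀ _ (ne_of_gt haa)
      _ < ε := by linarith
  set O' : Set (Fin n → ℝ) := Metric.ball w ε ∩ {u | dot a u < 0} with hO'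
  have hO'open : IsOpen O' :=
    Metric.isOpen_ball.inter (isOpen_lt (continuous_dot_left a) continuous_const)
  have hO'ne : O'.Nonempty := ⟨u₀, hu₀ball, hdau₀⟩
  obtain ⟨w', hw'O', hw'𝒟⟩ := h𝒟.inter_open_nonempty O' hO'open hO'ne
  -- both modified cones agree with `P` on `F`, hence are equal to `P`
  have hQ := Qcone_isCone P w hw𝒟
  have hQ' := Qcone_isCone P w' hw'𝒟
  have hA : ∀ s ∈ F, Qcone P w s = P s := Qcone_agree P F w hwO
  have hA' : ∀ s ∈ F, Qcone P w' s = P s :=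
    Qcone_agree P F w' (hball hw'O'.1)
  have e1 : Qcone P w = P := uniq _ hQ hA
  have e2 : Qcone P w' = P := uniq _ hQ' hA'
  -- but they differ at `z`
  have hdiff : Qcone P w z = Qcone P w' z := by rw [e1, e2]
  simp only [Qcone, if_neg hz0, decide_eq_decide] at hdiff
  have hneg : dot a w' < 0 := hw'O'.2
  have hpos' : 0 < dot a w' := hdiff.mp hzpos
  linarith
end

section
/- For n ≥ 2, the set LO(ℤⁿ) of positive cones of left orders on ℤⁿ is uncountable. -/
open Classical Polynomial

noncomputable def lfun (n : ℕ) (α : ℝ) (v : Fin n → ℤ) : ℝ :=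
  ∑ i : Fin n, (v i : ℝ) * α ^ (i : ℕ)

lemma lfun_add (n : ℕ) (α : ℝ) (a b : Fin n → ℤ) :
    lfun n α (a + b) = lfun n α a + lfun n α b := by
  unfold lfun
  rw [← Finset.sum_add_distrib]
  congr 1; ext i; push_cast [Pi.add_apply]; ring

lemma lfun_neg (n : ℕ) (α : ℝ) (a : Fin n → ℤ) :
    lfun n α (-a) = - lfun n α a := by
  unfold lfun
  rw [← Finset.sum_neg_distrib]
  congr 1; ext i; push_cast [Pi.neg_apply]; ring

lemma lfun_eq_zero {n : ℕ} {α : ℝ} (hα : Transcendental ℚ α) {v : Fin n → ℤ}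
    (h : lfun n α v = 0) : v = 0 := by
  set p : ℚ[X] := ∑ i : Fin n, Polynomial.C ((v i : ℚ)) * X ^ (i : ℕ) with hp
  have hev : Polynomial.aeval α p = 0 := by
    rw [hp, map_sum]
    rw [← h]
    unfold lfun
    congr 1; ext i
    simp [mul_comm]
  have hp0 : p = 0 := by
    by_contra h0
    exact hα ⟨p, h0, hev⟩
  funext i
  have hc : p.coeff (i : ℕ) = (v i : ℚ) := by
    rw [hp, Polynomial.finset_sum_coeff]
    rw [Finset.sum_eq_single i]
    · simp
    · intro j _ hj
      have : (j : ℕ) ≠ (i : ℕ) := fun h => hj (Fin.ext h)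
      simp only [Polynomial.coeff_C_mul, Polynomial.coeff_X_pow]
      rw [if_neg (Ne.symm this), mul_zero]
    · simp
  rw [hp0] at hc
  simp at hc
  exact_mod_cast hc.symm


noncomputable def coneOf (n : ℕ) (α : ℝ) : (Fin n → ℤ) → Bool :=
  fun v => decide (0 < lfun n α v)


lemma coneOf_mem {n : ℕ} {α : ℝ} (hα : Transcendental ℚ α) :
    IsAddLeftOrderCone (coneOf n α) := by
  constructor
  · intro a b ha hb
    simp only [coneOf, decide_eq_true_eq] at *
    rw [lfun_add]
    positivity
  · intro g
    simp only [coneOf, decide_eq_true_eq, lfun_neg]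
    constructor
    · intro hg
      have hne : lfun n α g ≠ 0 := fun h => hg (lfun_eq_zero hα h)
      rcases hne.lt_or_gt with h | h
      · exact Or.inr ⟨by linarith, by linarith⟩
      · exact Or.inl ⟨h, by linarith⟩
    · rintro (⟨h1, _⟩ | ⟨h1, _⟩) rfl <;>
      · have : lfun n α 0 = 0 := by unfold lfun; simp
        simp [this] at h1 <;> linarith [h1]

lemma lfun_pair {n : ℕ} (hn : 2 ≤ n) (a b : ℤ) (α : ℝ) :
    lfun n α (fun i => if (i : ℕ) = 0 then a else if (i : ℕ) = 1 then b else 0)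
      = (a : ℝ) + (b : ℝ) * α := by
  have h0 : (0 : ℕ) < n := by omega
  have h1 : (1 : ℕ) < n := by omega
  set i0 : Fin n := ⟨0, h0⟩
  set i1 : Fin n := ⟨1, h1⟩
  have hne : i0 ≠ i1 := by simp [i0, i1, Fin.ext_iff]
  unfold lfun
  rw [← Finset.sum_subset (Finset.subset_univ {i0, i1})]
  · rw [Finset.sum_pair hne]
    simp [i0, i1]
  · intro x _ hx
    simp only [Finset.mem_insert, Finset.mem_singleton] at hx
    push_neg at hx
    have hx0 : (x : ℕ) ≠ 0 := fun h => hx.1 (Fin.ext (by simp [i0, h]))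
    have hx1 : (x : ℕ) ≠ 1 := fun h => hx.2 (Fin.ext (by simp [i1, h]))
    simp [hx0, hx1]

lemma coneOf_inj {n : ℕ} (hn : 2 ≤ n) : Set.InjOn (coneOf n) {α : ℝ | Transcendental ℚ α} := by
  have key : ∀ α β : ℝ, α < β → coneOf n α ≠ coneOf n β := by
    intro α β hlt heq
    obtain ⟨r, hr1, hr2⟩ := exists_rat_btwn hlt
    set v : Fin n → ℤ := fun i => if (i : ℕ) = 0 then r.num else if (i : ℕ) = 1 then -r.den else 0
    have hα : lfun n α v = (r.num : ℝ) + (-r.den : ℤ) * α := lfun_pair hn _ _ _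
    have hβ : lfun n β v = (r.num : ℝ) + (-r.den : ℤ) * β := lfun_pair hn _ _ _
    have hrα : (α : ℝ) < (r : ℝ) := by exact_mod_cast hr1
    have hrβ : ((r : ℚ) : ℝ) < β := by exact_mod_cast hr2
    have hden : (0 : ℝ) < (r.den : ℝ) := by positivity
    have hrcast : ((r : ℚ) : ℝ) = (r.num : ℝ) / (r.den : ℝ) := by
      rw [Rat.cast_def]
    have h1 : 0 < lfun n α v := by
      rw [hα]; push_cast
      rw [hrcast] at hrα
      have := (lt_div_iff₀ hden).mp hrα
      linarith
    have h2 : ¬ 0 < lfun n β v := by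
      rw [hβ]; push_cast
      rw [hrcast] at hrβ
      have := (div_lt_iff₀ hden).mp hrβ
      linarith
    have := congrFun heq v
    simp only [coneOf, decide_eq_true_eq] at this
    rw [decide_eq_true h1] at this
    exact h2 (of_decide_eq_true this.symm)
  intro α hα β hβ h
  rcases lt_trichotomy α β with hl | he | hl
  · exact absurd h (key _ _ hl)
  · exact he
  · exact absurd h.symm (key _ _ hl)

lemma trans_uncountable : ¬ ({α : ℝ | Transcendental ℚ α}).Countable := by
  intro hc
  have halg : ({x : ℝ | IsAlgebraic ℚ x}).Countable := Algebraic.countable ℚ ℝ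
  have : (Set.univ : Set ℝ).Countable := by
    have : (Set.univ : Set ℝ) ⊆ {α : ℝ | Transcendental ℚ α} ∪ {x : ℝ | IsAlgebraic ℚ x} := by
      intro x _
      by_cases h : IsAlgebraic ℚ x
      · exact Or.inr h
      · exact Or.inl h
    exact Set.Countable.mono this (hc.union halg)
  exact Cardinal.not_countable_real this


theorem stmt_12 (n : ℕ) (hn : 2 ≤ n) : ¬ (AddLOset (Fin n → ℤ)).Countable := by
  intro hc
  apply trans_uncountable
  apply Set.countable_of_injective_of_countable_image (coneOf_inj hn)
  apply hc.mono
  rintro _ ⟨α, hα, rfl⟩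
  exact coneOf_mem hα
end
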